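/- Let Γ be a supercontracted 5-colored graph of order 2p, i.e., for each color c the subgraph Γ_{ĉ} spanned by the other four colors is connected. Then the reduced G-degree ω'_G(Γ) = ω_G(Γ)/3 satisfies ω'_G(Γ) ≥ p − 1. -/

import Mathlib

/-- An `n`-colored graph: a finite connected `n`-regular multigraph without loops,
equipped with a proper edge-coloring by the `n` colors `Fin n`. -/
structure ColoredGraph (n : ℕ) where
  V : Type
  E : Type
  [fintypeV : Fintype V]
  [fintypeE : Fintype E]
  ends : E → Sym2 V
  no_loops : ∀ e : E, ¬ (ends e).IsDiag
  color : E → Fin n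
  proper : ∀ e₁ e₂ : E, e₁ ≠ e₂ → color e₁ = color e₂ →
      ∀ v : V, ¬ (v ∈ ends e₁ ∧ v ∈ ends e₂)
  regular : ∀ v : V, Set.ncard {e : E | v ∈ ends e} = n
  connected : ∀ v w : V,
      Relation.ReflTransGen (fun a b => ∃ e : E, a ∈ ends e ∧ b ∈ ends e) v w

attribute [instance] ColoredGraph.fintypeV ColoredGraph.fintypeE

namespace ColoredGraph

variable {n : ℕ} (G : ColoredGraph n)

/-- Reachability using only edges whose color lies in `Δ`. -/
def Reach (Δ : Set (Fin n)) (v w : G.V) : Prop :=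
  Relation.EqvGen (fun a b => ∃ e : G.E, G.color e ∈ Δ ∧ a ∈ G.ends e ∧ b ∈ G.ends e) v w

/-- The `Δ`-residue containing `v`. -/
def residue (Δ : Set (Fin n)) (v : G.V) : Set G.V := {u | G.Reach Δ v u}

def residueSetoid (Δ : Set (Fin n)) : Setoid G.V :=
  ⟨G.Reach Δ, Relation.EqvGen.is_equivalence _⟩

/-- number of `Δ`-residues, i.e. connected components of the spanning subgraph `Γ_Δ`. -/
noncomputable def numResidues (Δ : Set (Fin n)) : ℕ :=
  Nat.card (Quotient (G.residueSetoid Δ))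

end ColoredGraph

namespace ColoredGraph

variable (G : ColoredGraph 5)

/-- the G-degree of a 5-colored graph of order 2p: the sum over the 12 cyclic
permutations ε of the five colors (up to inversion) of the regular genus ρ_ε,
where 2 − 2ρ_ε = Σ_{j∈Z₅} g_{ε_j,ε_{j+1}} + (1−4)p.  Each such permutation class
is represented by exactly 10 bijections ZMod 5 → Fin 5. -/
noncomputable def gDegree (p : ℕ) : ℚ :=
  (1 / 10) * ∑ᶠ ε : {ε : ZMod 5 → Fin 5 // Function.Bijective ε},
    (2 - ((∑ j : ZMod 5, (G.numResidues {ε.val j, ε.val (j + 1)} : ℚ)) - 3 * (p : ℚ))) / 2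

/-- supercontracted: for each color the residue spanned by the other four colors
is connected. -/
def Supercontracted : Prop :=
  ∀ c : Fin 5, G.numResidues {x | x ≠ c} = 1

end ColoredGraph

namespace ColoredGraph

attribute [local instance] Classical.propDecidable

variable {n : ℕ} (G : ColoredGraph n)

-- ## helper lemmas

lemma sym2_exists_eq (z : Sym2 G.V) : ∃ x y, z = s(x, y) := by
  induction z using Sym2.ind with
  | _ x y => exact ⟨x, y, rfl⟩

lemma exists_mem_sym2 (z : Sym2 G.V) : ∃ v, v ∈ z := by
  obtain ⟨x, y, rfl⟩ := G.sym2_exists_eq z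
  exact ⟨x, Sym2.mem_iff.mpr (Or.inl rfl)⟩

noncomputable def pt (e : G.E) : G.V := (G.exists_mem_sym2 (G.ends e)).choose

lemma pt_mem (e : G.E) : G.pt e ∈ G.ends e := (G.exists_mem_sym2 (G.ends e)).choose_spec

lemma card_filter_mem_ends (e : G.E) :
    (Finset.univ.filter (fun v => v ∈ G.ends e)).card = 2 := by
  classical
  obtain ⟨x, y, h⟩ := G.sym2_exists_eq (G.ends e)
  have hxy : x ≠ y := by
    have := G.no_loops e
    rw [h, Sym2.mk_isDiag_iff] at this
    exact this
  have : Finset.univ.filter (fun v => v ∈ G.ends e) = {x, y} := by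
    ext v
    simp [h, Sym2.mem_iff]
  rw [this, Finset.card_insert_of_notMem (by simp [hxy]), Finset.card_singleton]

lemma mem_ends_iff {e : G.E} {v w : G.V} (hv : v ∈ G.ends e) (hw : w ∈ G.ends e)
    (hvw : v ≠ w) : ∀ x, x ∈ G.ends e ↔ x = v ∨ x = w := by
  intro x
  obtain ⟨a, b, h⟩ := G.sym2_exists_eq (G.ends e)
  rw [h, Sym2.mem_iff] at hv hw ⊢
  rcases hv with rfl | rfl <;> rcases hw with rfl | rfl <;> tauto

lemma card_edges_at (v : G.V) :
    (Finset.univ.filter (fun e => v ∈ G.ends e)).card = n := by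
  classical
  have := G.regular v
  rwa [show {e : G.E | v ∈ G.ends e} = ↑(Finset.univ.filter (fun e => v ∈ G.ends e)) by
    ext e; simp, Set.ncard_coe_finset] at this

lemma existsUnique_edge (v : G.V) (c : Fin n) :
    ∃! e : G.E, v ∈ G.ends e ∧ G.color e = c := by
  classical
  set s := Finset.univ.filter (fun e => v ∈ G.ends e) with hs
  have hinj : Set.InjOn G.color ↑s := by
    intro e₁ h₁ e₂ h₂ hc
    by_contra hne
    exact G.proper e₁ e₂ hne hc v ⟨by simpa [hs] using h₁, by simpa [hs] using h₂⟩
  have hcard : (s.image G.color).card = n := by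
    rw [Finset.card_image_of_injOn hinj, G.card_edges_at]
  have himg : s.image G.color = Finset.univ := by
    apply Finset.eq_univ_of_card
    rw [hcard, Fintype.card_fin]
  have hc : c ∈ s.image G.color := by rw [himg]; exact Finset.mem_univ c
  obtain ⟨e, he, hec⟩ := Finset.mem_image.mp hc
  refine ⟨e, ⟨by simpa [hs] using he, hec⟩, ?_⟩
  intro e' ⟨he', hec'⟩
  exact hinj (by simp [hs, he']) (by simpa [hs] using he) (by rw [hec, hec'])

lemma card_filter_edge_at_color (v : G.V) (c : Fin n) :
    (Finset.univ.filter (fun e => v ∈ G.ends e ∧ G.color e = c)).card = 1 := by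
  classical
  obtain ⟨e, he, hu⟩ := G.existsUnique_edge v c
  rw [Finset.card_eq_one]
  exact ⟨e, by ext e'; simp only [Finset.mem_filter, Finset.mem_univ, true_and,
    Finset.mem_singleton]; exact ⟨fun h => hu e' h, fun h => h ▸ he⟩⟩

lemma card_color_class {p : ℕ} (hp : Fintype.card G.V = 2 * p) (hn : n ≠ 0) (c : Fin n) :
    (Finset.univ.filter (fun e => G.color e = c)).card = p := by
  classical
  have key : ∑ v : G.V, ∑ e : G.E, (if v ∈ G.ends e ∧ G.color e = c then 1 else 0)
      = ∑ e : G.E, ∑ v : G.V, (if v ∈ G.ends e ∧ G.color e = c then 1 else 0) :=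
    Finset.sum_comm
  have hL : ∑ v : G.V, ∑ e : G.E, (if v ∈ G.ends e ∧ G.color e = c then 1 else 0) = 2 * p := by
    rw [← hp]
    have : ∀ v : G.V, ∑ e : G.E, (if v ∈ G.ends e ∧ G.color e = c then 1 else 0) = 1 := by
      intro v
      rw [← Finset.card_filter]
      exact G.card_filter_edge_at_color v c
    rw [Finset.sum_congr rfl (fun v _ => this v)]
    simp [Finset.card_univ]
  have hR : ∑ e : G.E, ∑ v : G.V, (if v ∈ G.ends e ∧ G.color e = c then 1 else 0)
      = 2 * (Finset.univ.filter (fun e => G.color e = c)).card := by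
    have : ∀ e : G.E, ∑ v : G.V, (if v ∈ G.ends e ∧ G.color e = c then 1 else 0)
        = if G.color e = c then 2 else 0 := by
      intro e
      by_cases hc : G.color e = c
      · simp only [hc, and_true, if_true, ← Finset.card_filter]
        exact G.card_filter_mem_ends e
      · simp [hc]
    rw [Finset.sum_congr rfl (fun e _ => this e), Finset.sum_ite, Finset.sum_const,
      Finset.sum_const, smul_eq_mul, smul_eq_mul, mul_zero, add_zero, mul_comm]
  rw [hL] at key
  omega

lemma reach_mono {Δ Δ' : Set (Fin n)} (h : Δ ⊆ Δ') {v w : G.V} (hr : G.Reach Δ v w) :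
    G.Reach Δ' v w :=
  Relation.EqvGen.mono (fun a b ⟨e, h1, h2, h3⟩ => ⟨e, h h1, h2, h3⟩) _ _ hr

lemma reach_of_edge {Δ : Set (Fin n)} {e : G.E} (hc : G.color e ∈ Δ) {v w : G.V}
    (hv : v ∈ G.ends e) (hw : w ∈ G.ends e) : G.Reach Δ v w :=
  Relation.EqvGen.rel _ _ ⟨e, hc, hv, hw⟩

lemma reach_all_of_numResidues_one {Δ : Set (Fin n)} (h : G.numResidues Δ = 1) :
    ∀ v w : G.V, G.Reach Δ v w := by
  intro v w
  have hfin : Finite (Quotient (G.residueSetoid Δ)) := Quotient.finite _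
  rw [numResidues, Nat.card_eq_one_iff_unique] at h
  have := h.1
  exact Quotient.exact (Subsingleton.elim (Quotient.mk (G.residueSetoid Δ) v)
    (Quotient.mk (G.residueSetoid Δ) w))

end ColoredGraph

namespace ColoredGraph

attribute [local instance] Classical.propDecidable

variable (G : ColoredGraph 5)

/-- edges with colors in `Δ` -/
def EdgeSub (Δ : Set (Fin 5)) : Type := {e : G.E // G.color e ∈ Δ}

noncomputable instance (Δ : Set (Fin 5)) : Fintype (G.EdgeSub Δ) :=
  Subtype.fintype _

/-- the mod-2 boundary map -/
noncomputable def bdry (Δ : Set (Fin 5)) :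
    (G.EdgeSub Δ → ZMod 2) →ₗ[ZMod 2] (G.V → ZMod 2) where
  toFun f := fun v => ∑ e : G.EdgeSub Δ, if v ∈ G.ends e.1 then f e else 0
  map_add' f g := funext fun v => by
    simp only [Pi.add_apply]
    rw [← Finset.sum_add_distrib]
    exact Finset.sum_congr rfl fun e _ => by by_cases h : v ∈ G.ends e.1 <;> simp [h]
  map_smul' r f := funext fun v => by
    simp only [RingHom.id_apply, Pi.smul_apply, smul_eq_mul, Finset.mul_sum]
    exact Finset.sum_congr rfl fun e _ => by by_cases h : v ∈ G.ends e.1 <;> simp [h]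

/-- summing all coordinates -/
noncomputable def sumV : (G.V → ZMod 2) →ₗ[ZMod 2] ZMod 2 where
  toFun f := ∑ v : G.V, f v
  map_add' f g := Finset.sum_add_distrib
  map_smul' r f := by simp [Finset.mul_sum]

lemma bdry_apply (Δ : Set (Fin 5)) (f : G.EdgeSub Δ → ZMod 2) (v : G.V) :
    G.bdry Δ f v = ∑ e : G.EdgeSub Δ, if v ∈ G.ends e.1 then f e else 0 := rfl

lemma single_add_single_mem_range (Δ : Set (Fin 5)) {v w : G.V} (h : G.Reach Δ v w) :
    (fun x => (if x = v then (1 : ZMod 2) else 0) + (if x = w then 1 else 0))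
      ∈ LinearMap.range (G.bdry Δ) := by
  have h2 : ∀ x : ZMod 2, x + x = 0 := by decide
  induction h with
  | rel v w hvw =>
    obtain ⟨e, hc, hv, hw⟩ := hvw
    by_cases hvw' : v = w
    · subst hvw'
      have : (fun x => (if x = v then (1 : ZMod 2) else 0) + (if x = v then 1 else 0))
          = (0 : G.V → ZMod 2) := funext fun x => h2 _
      rw [this]; exact (LinearMap.range (G.bdry Δ)).zero_mem
    · refine ⟨fun e' => if e' = ⟨e, hc⟩ then 1 else 0, funext fun x => ?_⟩
      have hs := Fintype.sum_eq_single (⟨e, hc⟩ : G.EdgeSub Δ)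
        (f := fun e' : G.EdgeSub Δ =>
          if x ∈ G.ends e'.1 then (if e' = ⟨e, hc⟩ then (1 : ZMod 2) else 0) else 0)
        (fun e' hne => by simp [hne])
      rw [bdry_apply, hs]
      have hmem := G.mem_ends_iff hv hw hvw' x
      by_cases hx : x ∈ G.ends e
      · rcases hmem.mp hx with rfl | rfl
        · simp [hx, hvw']; rfl
        · simp [hx, show x ≠ v from fun hh => hvw' hh.symm]; rfl
      · simp [hx, show x ≠ v from fun hh => hx (hmem.mpr (Or.inl hh)),
          show x ≠ w from fun hh => hx (hmem.mpr (Or.inr hh))]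
  | refl v =>
    have : (fun x => (if x = v then (1 : ZMod 2) else 0) + (if x = v then 1 else 0))
        = (0 : G.V → ZMod 2) := funext fun x => h2 _
    rw [this]; exact (LinearMap.range (G.bdry Δ)).zero_mem
  | symm v w _ ih =>
    have : (fun x => (if x = w then (1 : ZMod 2) else 0) + (if x = v then 1 else 0))
        = (fun x => (if x = v then (1 : ZMod 2) else 0) + (if x = w then 1 else 0)) :=
      funext fun x => add_comm _ _
    rw [this]; exact ih
  | trans v w u _ _ ih1 ih2 =>
    have hsum := (LinearMap.range (G.bdry Δ)).add_mem ih1 ih2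
    have key : ∀ r s t : ZMod 2, r + t = (r + s) + (s + t) := by decide
    have : (fun x => (if x = v then (1 : ZMod 2) else 0) + (if x = u then 1 else 0))
        = ((fun x => (if x = v then (1 : ZMod 2) else 0) + (if x = w then 1 else 0))
          + fun x => (if x = w then (1 : ZMod 2) else 0) + (if x = u then 1 else 0)) :=
      funext fun x => key _ _ _
    rw [this]; exact hsum

lemma range_bdry_eq (Δ : Set (Fin 5)) [Nonempty G.V]
    (hconn : ∀ v w : G.V, G.Reach Δ v w) :
    LinearMap.range (G.bdry Δ) = LinearMap.ker (G.sumV) := by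
  apply le_antisymm
  · rintro f ⟨g, rfl⟩
    rw [LinearMap.mem_ker]
    show (∑ v : G.V, ∑ e : G.EdgeSub Δ, if v ∈ G.ends e.1 then g e else 0) = 0
    rw [Finset.sum_comm]
    apply Finset.sum_eq_zero
    intro e _
    rw [← Finset.sum_filter, Finset.sum_const, G.card_filter_mem_ends e.1]
    have : ∀ x : ZMod 2, 2 • x = 0 := by decide
    exact this _
  · intro f hf
    rw [LinearMap.mem_ker] at hf
    have hf' : (∑ v : G.V, f v) = 0 := hf
    set S := Finset.univ.filter (fun v => f v = 1) with hS
    have hbool : ∀ x : ZMod 2, x = if x = 1 then 1 else 0 := by decide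
    have hcardS : ((S.card : ℕ) : ZMod 2) = 0 := by
      rw [hS, ← Finset.sum_boole]
      calc (∑ v : G.V, if f v = 1 then (1 : ZMod 2) else 0)
          = ∑ v : G.V, f v := Finset.sum_congr rfl fun v _ => (hbool (f v)).symm
        _ = 0 := hf'
    have heven : (2 : ℕ) ∣ S.card := (ZMod.natCast_eq_zero_iff _ 2).mp hcardS
    have v₀ : G.V := Classical.arbitrary G.V
    have hdecomp : f = ∑ v ∈ S,
        (fun x => (if x = v then (1 : ZMod 2) else 0) + (if x = v₀ then 1 else 0)) := by
      funext x
      rw [Finset.sum_apply]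
      rw [Finset.sum_add_distrib, Finset.sum_ite_eq S x (fun _ => (1 : ZMod 2)),
        Finset.sum_const]
      have hz : S.card • (if x = v₀ then (1 : ZMod 2) else 0) = 0 := by
        obtain ⟨k, hk⟩ := heven
        rw [hk]
        have : ∀ (k : ℕ) (y : ZMod 2), (2 * k) • y = 0 := by
          intro k y
          rw [mul_comm, mul_smul]
          have : ∀ y : ZMod 2, 2 • y = 0 := by decide
          rw [this, smul_zero]
        exact this _ _
      rw [hz, add_zero]
      by_cases hx : x ∈ S
      · rw [if_pos hx]
        exact (Finset.mem_filter.mp hx).2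
      · rw [if_neg hx]
        have hne1 : f x ≠ 1 := fun hh => hx (Finset.mem_filter.mpr ⟨Finset.mem_univ _, hh⟩)
        have : ∀ y : ZMod 2, y ≠ 1 → y = 0 := by decide
        exact this _ hne1
    rw [hdecomp]
    exact Submodule.sum_mem _ fun v _ => G.single_add_single_mem_range Δ (hconn v v₀)

/-- the mod-2 cycle vector of an `S`-residue, inside the `Δ`-subgraph -/
noncomputable def zvec (Δ S : Set (Fin 5)) (q : Quotient (G.residueSetoid S)) :
    G.EdgeSub Δ → ZMod 2 :=
  fun e => if G.color e.1 ∈ S ∧ Quotient.mk (G.residueSetoid S) (G.pt e.1) = q then 1 else 0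

lemma card_filter_edge_pair (v : G.V) (x y : Fin 5) (hxy : x ≠ y) :
    (Finset.univ.filter
      (fun e : G.E => v ∈ G.ends e ∧ G.color e ∈ ({x, y} : Set (Fin 5)))).card = 2 := by
  have hsplit : Finset.univ.filter
        (fun e : G.E => v ∈ G.ends e ∧ G.color e ∈ ({x, y} : Set (Fin 5)))
      = Finset.univ.filter (fun e : G.E => v ∈ G.ends e ∧ G.color e = x)
        ∪ Finset.univ.filter (fun e : G.E => v ∈ G.ends e ∧ G.color e = y) := by
    ext e
    simp only [Finset.mem_filter, Finset.mem_union, Finset.mem_univ, true_and,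
      Set.mem_insert_iff, Set.mem_singleton_iff]
    tauto
  rw [hsplit, Finset.card_union_of_disjoint, G.card_filter_edge_at_color v x,
    G.card_filter_edge_at_color v y]
  rw [Finset.disjoint_left]
  intro e he1 he2
  rw [Finset.mem_filter] at he1 he2
  exact hxy (he1.2.2 ▸ he2.2.2)

lemma natcard_edge_pair (v : G.V) (x y : Fin 5) (hxy : x ≠ y) :
    Nat.card {e : G.E // v ∈ G.ends e ∧ G.color e ∈ ({x, y} : Set (Fin 5))} = 2 := by
  rw [Nat.card_eq_fintype_card, Fintype.card_subtype]
  convert G.card_filter_edge_pair v x y hxy using 2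

lemma sum_subtype_boole (Δ : Set (Fin 5)) (C : G.E → Prop) [inst : DecidablePred C] :
    (∑ e : G.EdgeSub Δ, if C e.1 then (1 : ZMod 2) else 0)
      = ((Nat.card {e : G.E // G.color e ∈ Δ ∧ C e} : ℕ) : ZMod 2) := by
  rw [Finset.sum_boole, ← Fintype.card_subtype, ← Nat.card_eq_fintype_card]
  congr 1
  exact Nat.card_congr ⟨fun z => ⟨z.1.1, z.1.2, z.2⟩, fun z => ⟨⟨z.1, z.2.1⟩, z.2.2⟩,
    fun z => rfl, fun z => rfl⟩

lemma bdry_zvec (Δ S : Set (Fin 5)) (x y : Fin 5) (hxy : x ≠ y) (hS : S = {x, y})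
    (hSΔ : S ⊆ Δ) (q : Quotient (G.residueSetoid S)) :
    G.bdry Δ (G.zvec Δ S q) = 0 := by
  funext v
  show G.bdry Δ (G.zvec Δ S q) v = (0 : ZMod 2)
  rw [bdry_apply]
  have step : ∀ e : G.EdgeSub Δ, (if v ∈ G.ends e.1 then G.zvec Δ S q e else 0)
      = if (v ∈ G.ends e.1 ∧ G.color e.1 ∈ S)
          ∧ Quotient.mk (G.residueSetoid S) v = q then 1 else 0 := by
    intro e
    show (if v ∈ G.ends e.1
        then (if G.color e.1 ∈ S ∧ Quotient.mk (G.residueSetoid S) (G.pt e.1) = q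
          then (1 : ZMod 2) else 0) else 0) = _
    by_cases h1 : v ∈ G.ends e.1
    · by_cases h2 : G.color e.1 ∈ S
      · have hq : (Quotient.mk (G.residueSetoid S) (G.pt e.1)) = Quotient.mk _ v :=
          Quotient.sound (G.reach_of_edge h2 (G.pt_mem e.1) h1)
        rw [hq]
        simp [h1, h2]
      · simp [h1, h2]
    · simp [h1]
  rw [Finset.sum_congr rfl fun e _ => step e]
  by_cases hq : Quotient.mk (G.residueSetoid S) v = q
  · have hstep2 : ∀ e : G.EdgeSub Δ,
        (if (v ∈ G.ends e.1 ∧ G.color e.1 ∈ S)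
            ∧ Quotient.mk (G.residueSetoid S) v = q then (1 : ZMod 2) else 0)
          = if v ∈ G.ends e.1 ∧ G.color e.1 ∈ S then 1 else 0 :=
      fun e => by simp [hq]
    rw [Finset.sum_congr rfl fun e _ => hstep2 e,
      G.sum_subtype_boole Δ (fun e => v ∈ G.ends e ∧ G.color e ∈ S),
      show Nat.card {e : G.E // G.color e ∈ Δ ∧ (v ∈ G.ends e ∧ G.color e ∈ S)}
          = Nat.card {e : G.E // v ∈ G.ends e ∧ G.color e ∈ S} from
        Nat.card_congr (Equiv.subtypeEquivRight
          (fun e => ⟨fun h => h.2, fun h => ⟨hSΔ h.2, h⟩⟩)),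
      hS, G.natcard_edge_pair v x y hxy]
    decide
  · have hstep2 : ∀ e : G.EdgeSub Δ,
        (if (v ∈ G.ends e.1 ∧ G.color e.1 ∈ S)
            ∧ Quotient.mk (G.residueSetoid S) v = q then (1 : ZMod 2) else 0) = 0 :=
      fun e => by simp [hq]
    rw [Finset.sum_congr rfl fun e _ => hstep2 e]
    exact Finset.sum_const_zero

lemma zvec_eval (Δ S : Set (Fin 5)) (c : Quotient (G.residueSetoid S) → ZMod 2)
    (e : G.EdgeSub Δ) :
    (∑ q : Quotient (G.residueSetoid S), c q • G.zvec Δ S q e)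
      = if G.color e.1 ∈ S then c (Quotient.mk (G.residueSetoid S) (G.pt e.1)) else 0 := by
  have step : ∀ q, c q • G.zvec Δ S q e
      = if Quotient.mk (G.residueSetoid S) (G.pt e.1) = q
          then (if G.color e.1 ∈ S then c q else 0) else 0 := by
    intro q
    show c q • (if G.color e.1 ∈ S ∧ Quotient.mk (G.residueSetoid S) (G.pt e.1) = q
        then (1 : ZMod 2) else 0) = _
    by_cases h1 : G.color e.1 ∈ S <;>
      by_cases h2 : Quotient.mk (G.residueSetoid S) (G.pt e.1) = q <;>
        simp [h1, h2]
  rw [Finset.sum_congr rfl fun q _ => step q, Finset.sum_ite_eq]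
  simp

lemma finrank_ker_bdry (Δ : Set (Fin 5)) [Nonempty G.V]
    (hconn : ∀ v w : G.V, G.Reach Δ v w) :
    Module.finrank (ZMod 2) (LinearMap.ker (G.bdry Δ)) + Fintype.card G.V
      = Fintype.card (G.EdgeSub Δ) + 1 := by
  have hrn := (G.bdry Δ).finrank_range_add_finrank_ker
  rw [G.range_bdry_eq Δ hconn] at hrn
  have hσ : Module.finrank (ZMod 2) (LinearMap.ker G.sumV) + 1 = Fintype.card G.V := by
    have h2 := G.sumV.finrank_range_add_finrank_ker
    have hsurj : LinearMap.range G.sumV = ⊤ := by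
      rw [LinearMap.range_eq_top]
      intro z
      obtain ⟨v₀⟩ := ‹Nonempty G.V›
      refine ⟨fun x => if x = v₀ then z else 0, ?_⟩
      show (∑ v : G.V, if v = v₀ then z else 0) = z
      rw [Finset.sum_ite_eq' Finset.univ v₀ (fun _ => z)]
      simp
    rw [hsurj, finrank_top, Module.finrank_self, Module.finrank_pi] at h2
    omega
  rw [Module.finrank_pi] at hrn
  omega

lemma card_edgeSub (p : ℕ) (hp : Fintype.card G.V = 2 * p) (a b c d : Fin 5)
    (hab : a ≠ b) (hac : a ≠ c) (had : a ≠ d) (hbc : b ≠ c) (hbd : b ≠ d) (hcd : c ≠ d) :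
    Fintype.card (G.EdgeSub ({a, b, c, d} : Set (Fin 5))) = 4 * p := by
  have h5 : (5 : ℕ) ≠ 0 := by norm_num
  have hcc : Fintype.card (G.EdgeSub ({a, b, c, d} : Set (Fin 5)))
      = (Finset.univ.filter
          (fun e : G.E => G.color e ∈ ({a, b, c, d} : Set (Fin 5)))).card := by
    rw [← Fintype.card_subtype]
    exact Fintype.card_congr (Equiv.cast rfl)
  rw [hcc]
  have hsplit : Finset.univ.filter (fun e : G.E => G.color e ∈ ({a, b, c, d} : Set (Fin 5)))
      = ((Finset.univ.filter (fun e : G.E => G.color e = a)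
          ∪ Finset.univ.filter (fun e : G.E => G.color e = b))
          ∪ Finset.univ.filter (fun e : G.E => G.color e = c))
          ∪ Finset.univ.filter (fun e : G.E => G.color e = d) := by
    ext e
    simp only [Finset.mem_filter, Finset.mem_union, Finset.mem_univ, true_and,
      Set.mem_insert_iff, Set.mem_singleton_iff]
    tauto
  have hdAB : Disjoint (Finset.univ.filter (fun e : G.E => G.color e = a))
      (Finset.univ.filter (fun e : G.E => G.color e = b)) := by
    rw [Finset.disjoint_left]
    intro e he1 he2
    rw [Finset.mem_filter] at he1 he2
    exact absurd (he1.2.symm.trans he2.2) hab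
  have hdABC : Disjoint ((Finset.univ.filter (fun e : G.E => G.color e = a))
        ∪ Finset.univ.filter (fun e : G.E => G.color e = b))
      (Finset.univ.filter (fun e : G.E => G.color e = c)) := by
    rw [Finset.disjoint_left]
    intro e he1 he2
    rw [Finset.mem_union, Finset.mem_filter, Finset.mem_filter] at he1
    rw [Finset.mem_filter] at he2
    rcases he1 with h | h
    · exact absurd (h.2.symm.trans he2.2) hac
    · exact absurd (h.2.symm.trans he2.2) hbc
  have hdABCD : Disjoint (((Finset.univ.filter (fun e : G.E => G.color e = a))
        ∪ Finset.univ.filter (fun e : G.E => G.color e = b))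
        ∪ Finset.univ.filter (fun e : G.E => G.color e = c))
      (Finset.univ.filter (fun e : G.E => G.color e = d)) := by
    rw [Finset.disjoint_left]
    intro e he1 he2
    rw [Finset.mem_union, Finset.mem_union, Finset.mem_filter, Finset.mem_filter,
      Finset.mem_filter] at he1
    rw [Finset.mem_filter] at he2
    rcases he1 with (h | h) | h
    · exact absurd (h.2.symm.trans he2.2) had
    · exact absurd (h.2.symm.trans he2.2) hbd
    · exact absurd (h.2.symm.trans he2.2) hcd
  rw [hsplit, Finset.card_union_of_disjoint hdABCD, Finset.card_union_of_disjoint hdABC,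
    Finset.card_union_of_disjoint hdAB, G.card_color_class hp h5 a, G.card_color_class hp h5 b,
    G.card_color_class hp h5 c, G.card_color_class hp h5 d]
  ring

lemma four_cycle_bound (p : ℕ) (hp : Fintype.card G.V = 2 * p) (a b c d : Fin 5)
    (hab : a ≠ b) (hac : a ≠ c) (had : a ≠ d) (hbc : b ≠ c) (hbd : b ≠ d) (hcd : c ≠ d)
    (hconn : ∀ v w : G.V, G.Reach ({a, b, c, d} : Set (Fin 5)) v w) :
    G.numResidues {a, b} + G.numResidues {b, c} + G.numResidues {c, d}
      + G.numResidues {d, a} ≤ 2 * p + 2 := by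
  rcases isEmpty_or_nonempty G.V with hVE | hVne
  · have hq : ∀ Δ : Set (Fin 5), G.numResidues Δ = 0 := fun Δ => by
      have : IsEmpty (Quotient (G.residueSetoid Δ)) := ⟨fun q => by
        obtain ⟨v, -⟩ := q.exists_rep; exact hVE.elim v⟩
      simp [numResidues, Nat.card_of_isEmpty]
    simp [hq]
  obtain ⟨v₀⟩ := hVne
  haveI : Nonempty G.V := ⟨v₀⟩
  have hppos : 1 ≤ p := by
    have := Fintype.card_pos (α := G.V); omega
  set Δ : Set (Fin 5) := {a, b, c, d} with hΔdef
  -- the four pair-sets are subsets of Δ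
  have hsub0 : ({a, b} : Set (Fin 5)) ⊆ Δ := by
    intro t ht; rw [hΔdef]
    simp only [Set.mem_insert_iff, Set.mem_singleton_iff] at ht ⊢; tauto
  have hsub1 : ({b, c} : Set (Fin 5)) ⊆ Δ := by
    intro t ht; rw [hΔdef]
    simp only [Set.mem_insert_iff, Set.mem_singleton_iff] at ht ⊢; tauto
  have hsub2 : ({c, d} : Set (Fin 5)) ⊆ Δ := by
    intro t ht; rw [hΔdef]
    simp only [Set.mem_insert_iff, Set.mem_singleton_iff] at ht ⊢; tauto
  have hsub3 : ({d, a} : Set (Fin 5)) ⊆ Δ := by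
    intro t ht; rw [hΔdef]
    simp only [Set.mem_insert_iff, Set.mem_singleton_iff] at ht ⊢; tauto
  -- index type
  set Q0 := Quotient (G.residueSetoid ({a, b} : Set (Fin 5))) with hQ0
  set Q1 := Quotient (G.residueSetoid ({b, c} : Set (Fin 5))) with hQ1
  set Q2 := Quotient (G.residueSetoid ({c, d} : Set (Fin 5))) with hQ2
  set Q3 := Quotient (G.residueSetoid ({d, a} : Set (Fin 5))) with hQ3
  set I := (Q0 ⊕ Q1) ⊕ (Q2 ⊕ Q3) with hI
  set Zfam : I → (G.EdgeSub Δ → ZMod 2) :=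
    Sum.elim (Sum.elim (fun q => G.zvec Δ {a, b} q) (fun q => G.zvec Δ {b, c} q))
      (Sum.elim (fun q => G.zvec Δ {c, d} q) (fun q => G.zvec Δ {d, a} q)) with hZfam
  have hZker : ∀ i : I, Zfam i ∈ LinearMap.ker (G.bdry Δ) := by
    rintro ((q | q) | (q | q)) <;> rw [LinearMap.mem_ker, hZfam] <;>
      simp only [Sum.elim_inl, Sum.elim_inr]
    · exact G.bdry_zvec Δ {a, b} a b hab rfl hsub0 q
    · exact G.bdry_zvec Δ {b, c} b c hbc rfl hsub1 q
    · exact G.bdry_zvec Δ {c, d} c d hcd rfl hsub2 q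
    · exact G.bdry_zvec Δ {d, a} d a (Ne.symm had) rfl hsub3 q
  set i₀ : I := Sum.inl (Sum.inl (Quotient.mk (G.residueSetoid ({a, b} : Set (Fin 5))) v₀))
    with hi₀
  -- linear independence of the family minus one element
  have hLI : LinearIndependent (ZMod 2)
      (fun i : {i : I // i ≠ i₀} => (⟨Zfam i.1, hZker i.1⟩ : LinearMap.ker (G.bdry Δ))) := by
    rw [Fintype.linearIndependent_iff]
    intro g hg
    set gg : I → ZMod 2 := fun i => if h : i ≠ i₀ then g ⟨i, h⟩ else 0 with hgg
    have hgg0 : gg i₀ = 0 := by simp only [hgg]; exact dif_neg (fun h => h rfl)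
    have hrel : (∑ i : I, gg i • Zfam i) = 0 := by
      have hval := congrArg Subtype.val hg
      simp only [AddSubmonoidClass.coe_finset_sum, SetLike.val_smul,
        ZeroMemClass.coe_zero] at hval
      rw [← Finset.sum_filter_add_sum_filter_not Finset.univ (fun i : I => i ≠ i₀)]
      have h2 : (∑ i ∈ Finset.univ.filter (fun i : I => ¬ i ≠ i₀), gg i • Zfam i) = 0 := by
        apply Finset.sum_eq_zero
        intro i hi
        rw [Finset.mem_filter] at hi
        have : gg i = 0 := by simp only [hgg]; exact dif_neg hi.2
        rw [this, zero_smul]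
      rw [h2, add_zero]
      rw [Finset.sum_subtype (p := fun i : I => i ≠ i₀) _ (by intro i; simp)
        (fun i => gg i • Zfam i)]
      rw [← hval]
      apply Finset.sum_congr rfl
      intro i _
      have : gg i.1 = g i := by simp only [hgg]; exact dif_pos i.2
      rw [this]
    -- suffices to show gg vanishes
    suffices hall : ∀ i : I, gg i = 0 by
      intro i
      have := hall i.1
      simp only [hgg] at this
      rw [dif_pos i.2] at this
      exact this
    by_contra hex
    push_neg at hex
    obtain ⟨i₁, hi₁⟩ := hex
    have hone : ∀ t : ZMod 2, t ≠ 0 → t = 1 := by decide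
    have hi₁1 : gg i₁ = 1 := hone _ hi₁
    -- the four residue functions
    set F0 : G.V → ZMod 2 :=
      fun v => gg (Sum.inl (Sum.inl (Quotient.mk (G.residueSetoid ({a, b} : Set (Fin 5))) v)))
      with hF0
    set F1 : G.V → ZMod 2 :=
      fun v => gg (Sum.inl (Sum.inr (Quotient.mk (G.residueSetoid ({b, c} : Set (Fin 5))) v)))
      with hF1
    set F2 : G.V → ZMod 2 :=
      fun v => gg (Sum.inr (Sum.inl (Quotient.mk (G.residueSetoid ({c, d} : Set (Fin 5))) v)))
      with hF2
    set F3 : G.V → ZMod 2 :=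
      fun v => gg (Sum.inr (Sum.inr (Quotient.mk (G.residueSetoid ({d, a} : Set (Fin 5))) v)))
      with hF3
    -- evaluation of the relation at an edge
    have hedge : ∀ e : G.EdgeSub Δ,
        ((if G.color e.1 ∈ ({a, b} : Set (Fin 5)) then F0 (G.pt e.1) else 0)
          + (if G.color e.1 ∈ ({b, c} : Set (Fin 5)) then F1 (G.pt e.1) else 0))
          + ((if G.color e.1 ∈ ({c, d} : Set (Fin 5)) then F2 (G.pt e.1) else 0)
          + (if G.color e.1 ∈ ({d, a} : Set (Fin 5)) then F3 (G.pt e.1) else 0)) = 0 := by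
      intro e
      have h := congrFun hrel e
      rw [Finset.sum_apply] at h
      rw [Fintype.sum_sum_type] at h
      rw [Fintype.sum_sum_type (f := fun i => (gg (Sum.inl i) • Zfam (Sum.inl i)) e)] at h
      rw [Fintype.sum_sum_type (f := fun i => (gg (Sum.inr i) • Zfam (Sum.inr i)) e)] at h
      simp only [hZfam, Sum.elim_inl, Sum.elim_inr, Pi.smul_apply] at h
      have e0 := G.zvec_eval Δ {a, b} (fun q => gg (Sum.inl (Sum.inl q))) e
      have e1 := G.zvec_eval Δ {b, c} (fun q => gg (Sum.inl (Sum.inr q))) e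
      have e2 := G.zvec_eval Δ {c, d} (fun q => gg (Sum.inr (Sum.inl q))) e
      have e3 := G.zvec_eval Δ {d, a} (fun q => gg (Sum.inr (Sum.inr q))) e
      rw [e0, e1, e2, e3] at h
      rw [hF0, hF1, hF2, hF3]
      simpa using h
    -- membership facts for the four colors
    have haD : a ∈ Δ := by rw [hΔdef]; simp
    have hbD : b ∈ Δ := by rw [hΔdef]; simp
    have hcD : c ∈ Δ := by rw [hΔdef]; simp
    have hdD : d ∈ Δ := by rw [hΔdef]; simp
    have hmm : ∀ u v : ZMod 2, u + v = 0 → u = v := by decide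
    -- step via color b : F0 = F1
    have hstep01 : ∀ v : G.V, F0 v = F1 v := by
      intro v
      obtain ⟨e, ⟨hve, hcol⟩, -⟩ := G.existsUnique_edge v b
      have hee : G.color e ∈ Δ := by rw [hcol]; exact hbD
      have h := hedge ⟨e, hee⟩
      simp only [hcol] at h
      rw [if_pos (show b ∈ ({a, b} : Set (Fin 5)) by simp),
        if_pos (show b ∈ ({b, c} : Set (Fin 5)) by simp),
        if_neg (show b ∉ ({c, d} : Set (Fin 5)) by simp [hbc, hbd]),
        if_neg (show b ∉ ({d, a} : Set (Fin 5)) by simp [hbd, Ne.symm hab]),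
        add_zero, add_zero] at h
      have hqq0 : Quotient.mk (G.residueSetoid ({a, b} : Set (Fin 5))) (G.pt e)
          = Quotient.mk (G.residueSetoid ({a, b} : Set (Fin 5))) v :=
        Quotient.sound (G.reach_of_edge
          (show G.color e ∈ ({a, b} : Set (Fin 5)) by rw [hcol]; simp) (G.pt_mem e) hve)
      have hqq1 : Quotient.mk (G.residueSetoid ({b, c} : Set (Fin 5))) (G.pt e)
          = Quotient.mk (G.residueSetoid ({b, c} : Set (Fin 5))) v :=
        Quotient.sound (G.reach_of_edge
          (show G.color e ∈ ({b, c} : Set (Fin 5)) by rw [hcol]; simp) (G.pt_mem e) hve)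
      simp only [hF0, hF1, hqq0, hqq1] at h ⊢
      exact hmm _ _ h
    -- step via color c : F1 = F2
    have hstep12 : ∀ v : G.V, F1 v = F2 v := by
      intro v
      obtain ⟨e, ⟨hve, hcol⟩, -⟩ := G.existsUnique_edge v c
      have hee : G.color e ∈ Δ := by rw [hcol]; exact hcD
      have h := hedge ⟨e, hee⟩
      simp only [hcol] at h
      rw [if_neg (show c ∉ ({a, b} : Set (Fin 5)) by simp [Ne.symm hac, Ne.symm hbc]),
        if_pos (show c ∈ ({b, c} : Set (Fin 5)) by simp),
        if_pos (show c ∈ ({c, d} : Set (Fin 5)) by simp),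
        if_neg (show c ∉ ({d, a} : Set (Fin 5)) by simp [hcd, Ne.symm hac]),
        add_zero, zero_add] at h
      have hqq1 : Quotient.mk (G.residueSetoid ({b, c} : Set (Fin 5))) (G.pt e)
          = Quotient.mk (G.residueSetoid ({b, c} : Set (Fin 5))) v :=
        Quotient.sound (G.reach_of_edge
          (show G.color e ∈ ({b, c} : Set (Fin 5)) by rw [hcol]; simp) (G.pt_mem e) hve)
      have hqq2 : Quotient.mk (G.residueSetoid ({c, d} : Set (Fin 5))) (G.pt e)
          = Quotient.mk (G.residueSetoid ({c, d} : Set (Fin 5))) v :=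
        Quotient.sound (G.reach_of_edge
          (show G.color e ∈ ({c, d} : Set (Fin 5)) by rw [hcol]; simp) (G.pt_mem e) hve)
      simp only [hF1, hF2, hqq1, hqq2] at h ⊢
      exact hmm _ _ h
    -- step via color d : F2 = F3
    have hstep23 : ∀ v : G.V, F2 v = F3 v := by
      intro v
      obtain ⟨e, ⟨hve, hcol⟩, -⟩ := G.existsUnique_edge v d
      have hee : G.color e ∈ Δ := by rw [hcol]; exact hdD
      have h := hedge ⟨e, hee⟩
      simp only [hcol] at h
      rw [if_neg (show d ∉ ({a, b} : Set (Fin 5)) by simp [Ne.symm had, Ne.symm hbd]),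
        if_neg (show d ∉ ({b, c} : Set (Fin 5)) by simp [Ne.symm hbd, Ne.symm hcd]),
        if_pos (show d ∈ ({c, d} : Set (Fin 5)) by simp),
        if_pos (show d ∈ ({d, a} : Set (Fin 5)) by simp),
        add_zero, zero_add] at h
      have hqq2 : Quotient.mk (G.residueSetoid ({c, d} : Set (Fin 5))) (G.pt e)
          = Quotient.mk (G.residueSetoid ({c, d} : Set (Fin 5))) v :=
        Quotient.sound (G.reach_of_edge
          (show G.color e ∈ ({c, d} : Set (Fin 5)) by rw [hcol]; simp) (G.pt_mem e) hve)
      have hqq3 : Quotient.mk (G.residueSetoid ({d, a} : Set (Fin 5))) (G.pt e)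
          = Quotient.mk (G.residueSetoid ({d, a} : Set (Fin 5))) v :=
        Quotient.sound (G.reach_of_edge
          (show G.color e ∈ ({d, a} : Set (Fin 5)) by rw [hcol]; simp) (G.pt_mem e) hve)
      simp only [hF2, hF3, hqq2, hqq3] at h ⊢
      exact hmm _ _ h
    -- step via color a : F3 = F0
    have hstep30 : ∀ v : G.V, F3 v = F0 v := by
      intro v
      obtain ⟨e, ⟨hve, hcol⟩, -⟩ := G.existsUnique_edge v a
      have hee : G.color e ∈ Δ := by rw [hcol]; exact haD
      have h := hedge ⟨e, hee⟩
      simp only [hcol] at h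
      rw [if_pos (show a ∈ ({a, b} : Set (Fin 5)) by simp),
        if_neg (show a ∉ ({b, c} : Set (Fin 5)) by simp [hab, hac]),
        if_neg (show a ∉ ({c, d} : Set (Fin 5)) by simp [hac, had]),
        if_pos (show a ∈ ({d, a} : Set (Fin 5)) by simp),
        add_zero, zero_add] at h
      have hqq0 : Quotient.mk (G.residueSetoid ({a, b} : Set (Fin 5))) (G.pt e)
          = Quotient.mk (G.residueSetoid ({a, b} : Set (Fin 5))) v :=
        Quotient.sound (G.reach_of_edge
          (show G.color e ∈ ({a, b} : Set (Fin 5)) by rw [hcol]; simp) (G.pt_mem e) hve)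
      have hqq3 : Quotient.mk (G.residueSetoid ({d, a} : Set (Fin 5))) (G.pt e)
          = Quotient.mk (G.residueSetoid ({d, a} : Set (Fin 5))) v :=
        Quotient.sound (G.reach_of_edge
          (show G.color e ∈ ({d, a} : Set (Fin 5)) by rw [hcol]; simp) (G.pt_mem e) hve)
      simp only [hF0, hF3, hqq0, hqq3] at h ⊢
      exact (hmm _ _ h).symm
    -- F0 is constant along any Δ-colored edge
    have hadj : ∀ (e : G.E), G.color e ∈ Δ → ∀ v w : G.V,
        v ∈ G.ends e → w ∈ G.ends e → F0 v = F0 w := by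
      intro e hce v w hv hw
      have hcases : G.color e = a ∨ G.color e = b ∨ G.color e = c ∨ G.color e = d := by
        rw [hΔdef] at hce
        simpa [Set.mem_insert_iff, Set.mem_singleton_iff] using hce
      have hF0eq : ∀ (hS : G.color e ∈ ({a, b} : Set (Fin 5))), F0 v = F0 w := by
        intro hS
        have : Quotient.mk (G.residueSetoid ({a, b} : Set (Fin 5))) v
            = Quotient.mk (G.residueSetoid ({a, b} : Set (Fin 5))) w :=
          Quotient.sound (G.reach_of_edge hS hv hw)
        simp only [hF0, this]
      have hF1eq : ∀ (hS : G.color e ∈ ({b, c} : Set (Fin 5))), F1 v = F1 w := by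
        intro hS
        have : Quotient.mk (G.residueSetoid ({b, c} : Set (Fin 5))) v
            = Quotient.mk (G.residueSetoid ({b, c} : Set (Fin 5))) w :=
          Quotient.sound (G.reach_of_edge hS hv hw)
        simp only [hF1, this]
      have hF2eq : ∀ (hS : G.color e ∈ ({c, d} : Set (Fin 5))), F2 v = F2 w := by
        intro hS
        have : Quotient.mk (G.residueSetoid ({c, d} : Set (Fin 5))) v
            = Quotient.mk (G.residueSetoid ({c, d} : Set (Fin 5))) w :=
          Quotient.sound (G.reach_of_edge hS hv hw)
        simp only [hF2, this]
      rcases hcases with hx | hx | hx | hx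
      · exact hF0eq (by rw [hx]; simp)
      · exact hF0eq (by rw [hx]; simp)
      · rw [hstep01 v, hstep01 w]
        exact hF1eq (by rw [hx]; simp)
      · rw [hstep01 v, hstep12 v, hstep01 w, hstep12 w]
        exact hF2eq (by rw [hx]; simp)
    -- F0 is globally constant
    have hconst : ∀ v w : G.V, F0 v = F0 w := by
      intro v w
      induction hconn v w with
      | rel v w hvw =>
        obtain ⟨e, hc, hv, hw⟩ := hvw
        exact hadj e hc v w hv hw
      | refl v => rfl
      | symm v w _ ih => exact ih.symm
      | trans v w u _ _ ih1 ih2 => exact ih1.trans ih2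
    -- derive the contradiction
    have hF0v₀ : F0 v₀ = 0 := hgg0
    have hone' : (0 : ZMod 2) ≠ 1 := by decide
    apply hone'
    rw [← hF0v₀]
    rcases i₁ with (q | q) | (q | q)
    · obtain ⟨v, rfl⟩ := q.exists_rep
      rw [hconst v₀ v]
      exact hi₁1
    · obtain ⟨v, rfl⟩ := q.exists_rep
      rw [hconst v₀ v, hstep01 v]
      exact hi₁1
    · obtain ⟨v, rfl⟩ := q.exists_rep
      rw [hconst v₀ v, hstep01 v, hstep12 v]
      exact hi₁1
    · obtain ⟨v, rfl⟩ := q.exists_rep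
      rw [hconst v₀ v, hstep01 v, hstep12 v, hstep23 v]
      exact hi₁1
  -- now the cardinality bound
  have hfin : Fintype.card {i : I // i ≠ i₀} ≤ Module.finrank (ZMod 2)
      (LinearMap.ker (G.bdry Δ)) := hLI.fintype_card_le_finrank
  have hdim := G.finrank_ker_bdry Δ hconn
  have hE : Fintype.card (G.EdgeSub Δ) = 4 * p :=
    G.card_edgeSub p hp a b c d hab hac had hbc hbd hcd
  haveI : Nonempty I := ⟨i₀⟩
  have hcompl : Fintype.card {i : I // i ≠ i₀} + 1 = Fintype.card I := by
    have h1 : Fintype.card {i : I // i ≠ i₀} = Fintype.card {i : I // ¬ i = i₀} :=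
      Fintype.card_congr (Equiv.subtypeEquivRight (fun _ => Iff.rfl))
    have h2 := Fintype.card_subtype_compl (fun i : I => i = i₀)
    have h3 : Fintype.card {i : I // i = i₀} = 1 := Fintype.card_subtype_eq i₀
    have h4 : 1 ≤ Fintype.card I := Fintype.card_pos (α := I)
    omega
  have hsum : G.numResidues {a, b} + G.numResidues {b, c} + G.numResidues {c, d}
      + G.numResidues {d, a} = Fintype.card I := by
    rw [show Fintype.card I = Fintype.card ((Q0 ⊕ Q1) ⊕ (Q2 ⊕ Q3)) from rfl,
      Fintype.card_sum, Fintype.card_sum, Fintype.card_sum]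
    simp only [numResidues, hQ0, hQ1, hQ2, hQ3, Nat.card_eq_fintype_card]
    ring
  omega

end ColoredGraph

/-- a supercontracted 5-colored graph of order 2p has reduced
G-degree ω'_G(Γ) = ω_G(Γ)/3 at least p − 1. -/
theorem supercontracted_reduced_Gdegree_ge (G : ColoredGraph 5) (p : ℕ)
    (hp : Fintype.card G.V = 2 * p) (hsc : G.Supercontracted) :
    (p : ℚ) - 1 ≤ G.gDegree p / 3 := by
  classical
  set B := {ε : ZMod 5 → Fin 5 // Function.Bijective ε} with hB
  set f : B → ℕ := fun ε => ∑ j : ZMod 5, G.numResidues {ε.val j, ε.val (j + 1)} with hf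
  set g : B → ℕ := fun ε => ∑ j : ZMod 5, G.numResidues {ε.val j, ε.val (j + 2)} with hg
  have hreach : ∀ m : Fin 5, ∀ v w : G.V, G.Reach {x | x ≠ m} v w :=
    fun m => G.reach_all_of_numResidues_one (hsc m)
  have husum : ∀ F : ZMod 5 → ℕ, (∑ j : ZMod 5, F j) = F 0 + F 1 + F 2 + F 3 + F 4 := by
    intro F
    rw [show (Finset.univ : Finset (ZMod 5)) = {0, 1, 2, 3, 4} from by decide]
    rw [show ({0, 1, 2, 3, 4} : Finset (ZMod 5))
        = insert 0 (insert 1 (insert 2 (insert 3 {4}))) from rfl]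
    rw [Finset.sum_insert (by decide), Finset.sum_insert (by decide),
      Finset.sum_insert (by decide), Finset.sum_insert (by decide), Finset.sum_singleton]
    ring
  have hsym : ∀ x y : Fin 5, G.numResidues {x, y} = G.numResidues {y, x} := fun x y => by
    rw [Set.pair_comm]
  have key : ∀ ε : B, f ε + g ε ≤ 5 * p + 5 := by
    intro ε
    have hne : ∀ i j : ZMod 5, i ≠ j → ε.val i ≠ ε.val j :=
      fun i j hij h => hij (ε.2.1 h)
    have htool : ∀ m i j k l : ZMod 5,
        (∀ r : ZMod 5, r ≠ m → r = i ∨ r = j ∨ r = k ∨ r = l) →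
        ∀ v w : G.V,
          G.Reach ({ε.val i, ε.val j, ε.val k, ε.val l} : Set (Fin 5)) v w := by
      intro m i j k l hcov v w
      refine G.reach_mono ?_ (hreach (ε.val m) v w)
      intro x hx
      have hx' : x ≠ ε.val m := hx
      obtain ⟨r, rfl⟩ := ε.2.2 x
      have hrm : r ≠ m := fun h => hx' (by rw [h])
      rcases hcov r hrm with rfl | rfl | rfl | rfl <;>
        simp [Set.mem_insert_iff, Set.mem_singleton_iff]
    have B1 := G.four_cycle_bound p hp (ε.val 1) (ε.val 2) (ε.val 3) (ε.val 4)
      (hne 1 2 (by decide)) (hne 1 3 (by decide)) (hne 1 4 (by decide))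
      (hne 2 3 (by decide)) (hne 2 4 (by decide)) (hne 3 4 (by decide))
      (htool 0 1 2 3 4 (by decide))
    have B2 := G.four_cycle_bound p hp (ε.val 0) (ε.val 2) (ε.val 3) (ε.val 4)
      (hne 0 2 (by decide)) (hne 0 3 (by decide)) (hne 0 4 (by decide))
      (hne 2 3 (by decide)) (hne 2 4 (by decide)) (hne 3 4 (by decide))
      (htool 1 0 2 3 4 (by decide))
    have B3 := G.four_cycle_bound p hp (ε.val 0) (ε.val 1) (ε.val 3) (ε.val 4)
      (hne 0 1 (by decide)) (hne 0 3 (by decide)) (hne 0 4 (by decide))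
      (hne 1 3 (by decide)) (hne 1 4 (by decide)) (hne 3 4 (by decide))
      (htool 2 0 1 3 4 (by decide))
    have B4 := G.four_cycle_bound p hp (ε.val 0) (ε.val 1) (ε.val 2) (ε.val 4)
      (hne 0 1 (by decide)) (hne 0 2 (by decide)) (hne 0 4 (by decide))
      (hne 1 2 (by decide)) (hne 1 4 (by decide)) (hne 2 4 (by decide))
      (htool 3 0 1 2 4 (by decide))
    have B5 := G.four_cycle_bound p hp (ε.val 0) (ε.val 1) (ε.val 2) (ε.val 3)
      (hne 0 1 (by decide)) (hne 0 2 (by decide)) (hne 0 3 (by decide))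
      (hne 1 2 (by decide)) (hne 1 3 (by decide)) (hne 2 3 (by decide))
      (htool 4 0 1 2 3 (by decide))
    have B6 := G.four_cycle_bound p hp (ε.val 2) (ε.val 4) (ε.val 1) (ε.val 3)
      (hne 2 4 (by decide)) (hne 2 1 (by decide)) (hne 2 3 (by decide))
      (hne 4 1 (by decide)) (hne 4 3 (by decide)) (hne 1 3 (by decide))
      (htool 0 2 4 1 3 (by decide))
    have B7 := G.four_cycle_bound p hp (ε.val 0) (ε.val 4) (ε.val 1) (ε.val 3)
      (hne 0 4 (by decide)) (hne 0 1 (by decide)) (hne 0 3 (by decide))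
      (hne 4 1 (by decide)) (hne 4 3 (by decide)) (hne 1 3 (by decide))
      (htool 2 0 4 1 3 (by decide))
    have B8 := G.four_cycle_bound p hp (ε.val 0) (ε.val 2) (ε.val 1) (ε.val 3)
      (hne 0 2 (by decide)) (hne 0 1 (by decide)) (hne 0 3 (by decide))
      (hne 2 1 (by decide)) (hne 2 3 (by decide)) (hne 1 3 (by decide))
      (htool 4 0 2 1 3 (by decide))
    have B9 := G.four_cycle_bound p hp (ε.val 0) (ε.val 2) (ε.val 4) (ε.val 3)
      (hne 0 2 (by decide)) (hne 0 4 (by decide)) (hne 0 3 (by decide))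
      (hne 2 4 (by decide)) (hne 2 3 (by decide)) (hne 4 3 (by decide))
      (htool 1 0 2 4 3 (by decide))
    have B10 := G.four_cycle_bound p hp (ε.val 0) (ε.val 2) (ε.val 4) (ε.val 1)
      (hne 0 2 (by decide)) (hne 0 4 (by decide)) (hne 0 1 (by decide))
      (hne 2 4 (by decide)) (hne 2 1 (by decide)) (hne 4 1 (by decide))
      (htool 3 0 2 4 1 (by decide))
    have hfexp : f ε = G.numResidues {ε.val 0, ε.val 1} + G.numResidues {ε.val 1, ε.val 2}
        + G.numResidues {ε.val 2, ε.val 3} + G.numResidues {ε.val 3, ε.val 4}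
        + G.numResidues {ε.val 4, ε.val 0} := by
      simp only [hf]
      rw [husum (fun j => G.numResidues {ε.val j, ε.val (j + 1)})]
      simp only [show (0 : ZMod 5) + 1 = 1 from by decide, show (1 : ZMod 5) + 1 = 2 from by decide,
        show (2 : ZMod 5) + 1 = 3 from by decide, show (3 : ZMod 5) + 1 = 4 from by decide,
        show (4 : ZMod 5) + 1 = 0 from by decide]
    have hgexp : g ε = G.numResidues {ε.val 0, ε.val 2} + G.numResidues {ε.val 1, ε.val 3}
        + G.numResidues {ε.val 2, ε.val 4} + G.numResidues {ε.val 3, ε.val 0}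
        + G.numResidues {ε.val 4, ε.val 1} := by
      simp only [hg]
      rw [husum (fun j => G.numResidues {ε.val j, ε.val (j + 2)})]
      simp only [show (0 : ZMod 5) + 2 = 2 from by decide, show (1 : ZMod 5) + 2 = 3 from by decide,
        show (2 : ZMod 5) + 2 = 4 from by decide, show (3 : ZMod 5) + 2 = 0 from by decide,
        show (4 : ZMod 5) + 2 = 1 from by decide]
    have hs1 := hsym (ε.val 3) (ε.val 2)
    have hs2 := hsym (ε.val 0) (ε.val 4)
    have hs3 := hsym (ε.val 2) (ε.val 1)
    have hs4 := hsym (ε.val 4) (ε.val 3)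
    have hs5 := hsym (ε.val 1) (ε.val 0)
    omega
  -- reindexing: the "pentagram" sum equals the "pentagon" sum
  have hb2 : Function.Bijective (fun j : ZMod 5 => 2 * j) := by decide
  have hb3 : Function.Bijective (fun j : ZMod 5 => 3 * j) := by decide
  have hΦ : ∀ ε : B, Function.Bijective (fun j : ZMod 5 => ε.val (2 * j)) :=
    fun ε => ε.2.comp hb2
  have hΦ' : ∀ ε : B, Function.Bijective (fun j : ZMod 5 => ε.val (3 * j)) :=
    fun ε => ε.2.comp hb3
  have h23 : ∀ j : ZMod 5, 2 * (3 * j) = j := by decide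
  have h32 : ∀ j : ZMod 5, 3 * (2 * j) = j := by decide
  set Φ : B ≃ B :=
    { toFun := fun ε => ⟨fun j => ε.val (2 * j), hΦ ε⟩
      invFun := fun ε => ⟨fun j => ε.val (3 * j), hΦ' ε⟩
      left_inv := fun ε => Subtype.ext (funext fun j => by
        show ε.val (2 * (3 * j)) = ε.val j; rw [h23 j])
      right_inv := fun ε => Subtype.ext (funext fun j => by
        show ε.val (3 * (2 * j)) = ε.val j; rw [h32 j]) } with hΦdef
  have hswap : (∑ ε : B, g ε) = ∑ ε : B, f ε := by
    rw [← Equiv.sum_comp Φ f]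
    apply Finset.sum_congr rfl
    intro ε _
    show g ε = f (Φ ε)
    have hmul : ∀ j : ZMod 5, 2 * (j + 1) = 2 * j + 2 := fun j => by ring
    have hcalc : (∑ j : ZMod 5, G.numResidues {ε.val (2 * j), ε.val (2 * (j + 1))})
        = ∑ j : ZMod 5, G.numResidues {ε.val j, ε.val (j + 2)} := by
      calc (∑ j : ZMod 5, G.numResidues {ε.val (2 * j), ε.val (2 * (j + 1))})
          = ∑ j : ZMod 5, G.numResidues {ε.val (2 * j), ε.val (2 * j + 2)} :=
            Finset.sum_congr rfl (fun j _ => by rw [hmul j])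
        _ = ∑ t : ZMod 5, G.numResidues {ε.val t, ε.val (t + 2)} :=
            Fintype.sum_bijective (fun j : ZMod 5 => 2 * j) hb2
              (fun j => G.numResidues {ε.val (2 * j), ε.val (2 * j + 2)})
              (fun t => G.numResidues {ε.val t, ε.val (t + 2)}) (fun j => rfl)
    exact hcalc.symm
  have hcard : Fintype.card B = 120 := by
    have e1 : B ≃ (ZMod 5 ≃ Fin 5) :=
      { toFun := fun ε => Equiv.ofBijective ε.1 ε.2
        invFun := fun e => ⟨e, e.bijective⟩
        left_inv := fun ε => Subtype.ext rfl
        right_inv := fun e => Equiv.ext fun x => rfl }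
    rw [Fintype.card_congr e1, Fintype.card_equiv (Equiv.cast (show (ZMod 5 : Type) = Fin 5 from rfl))]
    rw [ZMod.card 5]
    decide
  have hT : 2 * (∑ ε : B, f ε) ≤ 600 * p + 600 := by
    have h1 : (∑ ε : B, (f ε + g ε)) ≤ ∑ _ε : B, (5 * p + 5) :=
      Finset.sum_le_sum (fun ε _ => key ε)
    rw [Finset.sum_add_distrib, hswap, Finset.sum_const, Finset.card_univ, hcard,
      smul_eq_mul] at h1
    omega
  -- final computation
  rw [ColoredGraph.gDegree, finsum_eq_sum_of_fintype]
  have hterm : ∀ ε : B,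
      (2 - ((∑ j : ZMod 5, (G.numResidues {ε.val j, ε.val (j + 1)} : ℚ)) - 3 * (p : ℚ))) / 2
        = (2 + 3 * (p : ℚ)) / 2 - ((f ε : ℕ) : ℚ) / 2 := by
    intro ε
    have hcast : (∑ j : ZMod 5, (G.numResidues {ε.val j, ε.val (j + 1)} : ℚ))
        = ((f ε : ℕ) : ℚ) := by
      rw [hf, Nat.cast_sum]
    rw [hcast]; ring
  rw [Finset.sum_congr rfl (fun ε _ => hterm ε), Finset.sum_sub_distrib, Finset.sum_const,
    Finset.card_univ, hcard, ← Finset.sum_div, nsmul_eq_mul]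
  have hcast2 : (∑ ε : B, ((f ε : ℕ) : ℚ)) = (((∑ ε : B, f ε) : ℕ) : ℚ) :=
    (Nat.cast_sum _ _).symm
  rw [hcast2]
  have hTq : 2 * (((∑ ε : B, f ε) : ℕ) : ℚ) ≤ 600 * (p : ℚ) + 600 := by
    exact_mod_cast hT
  linarith
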